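/- Let G₁ and G₂ be finite abelian groups. Then there is an order isomorphism between Iso(G₁) and Iso(G₂) if and only if there is a bijection σ between the set of prime divisors of |G₁| and the set of prime divisors of |G₂| such that for every prime p dividing |G₁|, a Sylow p-subgroup S_p of G₁ and a Sylow σ(p)-subgroup S'_{σ(p)} of G₂ satisfy: Iso(S_p) and Iso(S'_{σ(p)}) are order isomorphic (in particular |S_p| = σ(p)^{β} where p^{β} = |S_p|, i.e., the exponents match). -/

import Mathlib

/-- The setoid on subgroups of `G` given by group isomorphism. -/
def isoSetoid (G : Type*) [Group G] : Setoid (Subgroup G) where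
  r H K := Nonempty (H ≃* K)
  iseqv := ⟨fun H => ⟨MulEquiv.refl H⟩, fun ⟨e⟩ => ⟨e.symm⟩, fun ⟨e⟩ ⟨f⟩ => ⟨e.trans f⟩⟩

/-- `IsoClasses G` is the set of equivalence classes of subgroups of `G`
under group isomorphism. -/
def IsoClasses (G : Type*) [Group G] : Type _ := Quotient (isoSetoid G)

/-- The class of a subgroup `H` in `IsoClasses G`. -/
def IsoCls {G : Type*} [Group G] (H : Subgroup G) : IsoClasses G :=
  Quotient.mk (isoSetoid G) H

/-- `[H] ≤ [K]` iff some member of `[H]` is contained in some member of `[K]`. -/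
instance instLEIsoClasses (G : Type*) [Group G] : LE (IsoClasses G) where
  le x y := ∃ H K : Subgroup G, IsoCls H = x ∧ IsoCls K = y ∧ H ≤ K

namespace IsoClassesAux

/-! ### Basic lemmas about `IsoClasses` -/

section Basic

variable {G : Type*} [Group G]

theorem le_def {x y : IsoClasses G} :
    x ≤ y ↔ ∃ H K : Subgroup G, IsoCls H = x ∧ IsoCls K = y ∧ H ≤ K := Iff.rfl

theorem ex_rep (x : IsoClasses G) : ∃ H : Subgroup G, IsoCls H = x :=
  Quotient.exists_rep x

theorem cls_eq_iff {H K : Subgroup G} : IsoCls H = IsoCls K ↔ Nonempty (↥H ≃* ↥K) := by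
  constructor
  · exact fun h => Quotient.exact h
  · exact fun h => Quotient.sound h

theorem cls_le_iff {H K : Subgroup G} :
    IsoCls H ≤ IsoCls K ↔ ∃ f : ↥H →* ↥K, Function.Injective f := by
  constructor
  · rintro ⟨A, B, hA, hB, hle⟩
    obtain ⟨eA⟩ := cls_eq_iff.mp hA
    obtain ⟨eB⟩ := cls_eq_iff.mp hB
    refine ⟨(eB.toMonoidHom.comp (Subgroup.inclusion hle)).comp eA.symm.toMonoidHom, ?_⟩
    exact (eB.injective.comp (Subgroup.inclusion_injective hle)).comp eA.symm.injective
  · rintro ⟨f, hf⟩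
    have hinj : Function.Injective (K.subtype.comp f) := K.subtype_injective.comp hf
    refine ⟨(K.subtype.comp f).range, K, ?_, rfl, ?_⟩
    · exact cls_eq_iff.mpr ⟨(MonoidHom.ofInjective hinj).symm⟩
    · rintro x ⟨h, rfl⟩
      exact (f h).2

theorem cls_le_refl (x : IsoClasses G) : x ≤ x := by
  obtain ⟨H, rfl⟩ := ex_rep x
  exact ⟨H, H, rfl, rfl, le_rfl⟩

theorem cls_le_trans {x y z : IsoClasses G} (h₁ : x ≤ y) (h₂ : y ≤ z) : x ≤ z := by
  obtain ⟨A, B, rfl, hB, hAB⟩ := h₁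
  obtain ⟨C, D, hC, rfl, hCD⟩ := h₂
  obtain ⟨e⟩ := cls_eq_iff.mp (hB.trans hC.symm)
  refine cls_le_iff.mpr
    ⟨(Subgroup.inclusion hCD).comp (e.toMonoidHom.comp (Subgroup.inclusion hAB)), ?_⟩
  exact (Subgroup.inclusion_injective hCD).comp
    (e.injective.comp (Subgroup.inclusion_injective hAB))

/-- The cardinality of (any representative of) an isomorphism class. -/
noncomputable def clsCard : IsoClasses G → ℕ :=
  Quotient.lift (fun H : Subgroup G => Nat.card ↥H) fun _ _ ⟨e⟩ => Nat.card_congr e.toEquiv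

@[simp] theorem clsCard_mk (H : Subgroup G) : clsCard (IsoCls H) = Nat.card ↥H := rfl

theorem clsCard_le_of_le [Finite G] {x y : IsoClasses G} (h : x ≤ y) :
    clsCard x ≤ clsCard y := by
  obtain ⟨A, B, rfl, rfl, hAB⟩ := h
  simpa using Subgroup.card_le_of_le hAB

theorem cls_eq_of_le_of_card_le [Finite G] {x y : IsoClasses G} (h : x ≤ y)
    (hc : clsCard y ≤ clsCard x) : x = y := by
  obtain ⟨A, B, rfl, rfl, hAB⟩ := h
  have hcard : Nat.card ↥A = Nat.card ↥B :=
    le_antisymm (Subgroup.card_le_of_le hAB) (by simpa using hc)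
  have hbij : Function.Bijective (Subgroup.inclusion hAB) :=
    (Nat.bijective_iff_injective_and_card _).mpr ⟨Subgroup.inclusion_injective hAB, hcard⟩
  exact cls_eq_iff.mpr ⟨MulEquiv.ofBijective _ hbij⟩

theorem cls_le_antisymm [Finite G] {x y : IsoClasses G} (h₁ : x ≤ y) (h₂ : y ≤ x) : x = y :=
  cls_eq_of_le_of_card_le h₁ (clsCard_le_of_le h₂)

theorem clsCard_lt_of_le_of_ne [Finite G] {x y : IsoClasses G} (h : x ≤ y) (hne : x ≠ y) :
    clsCard x < clsCard y :=
  lt_of_le_of_ne (clsCard_le_of_le h) fun hc => hne (cls_eq_of_le_of_card_le h hc.ge)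

theorem bot_cls_le (x : IsoClasses G) : IsoCls (⊥ : Subgroup G) ≤ x := by
  obtain ⟨H, rfl⟩ := ex_rep x
  exact ⟨⊥, H, rfl, rfl, bot_le⟩

@[simp] theorem clsCard_bot : clsCard (IsoCls (⊥ : Subgroup G)) = 1 := by
  simp

theorem eq_bot_of_le_bot [Finite G] {x : IsoClasses G}
    (h : x ≤ IsoCls (⊥ : Subgroup G)) : x = IsoCls ⊥ :=
  cls_le_antisymm h (bot_cls_le x)

theorem clsCard_pos [Finite G] (x : IsoClasses G) : 0 < clsCard x := by
  obtain ⟨H, rfl⟩ := ex_rep x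
  simpa using Nat.card_pos

theorem clsCard_dvd [Finite G] (x : IsoClasses G) : clsCard x ∣ Nat.card G := by
  obtain ⟨H, rfl⟩ := ex_rep x
  simpa using Subgroup.card_subgroup_dvd_card H

end Basic

/-! ### Chains in `IsoClasses` of a `p`-group -/

section Chain

variable {G : Type*} [Group G] [Finite G]

theorem chain_le {p m : ℕ} (hp : p.Prime) (hG : Nat.card G = p ^ m)
    {c : ℕ → IsoClasses G} {L : ℕ}
    (hc : ∀ i < L, c i ≤ c (i + 1) ∧ c i ≠ c (i + 1)) : L ≤ m := by
  have key : ∀ i, i ≤ L → p ^ i ≤ clsCard (c i) := by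
    intro i
    induction i with
    | zero => intro _; simpa using Nat.one_le_iff_ne_zero.mpr (clsCard_pos (c 0)).ne'
    | succ k ih =>
      intro hi
      have hk := ih (Nat.le_of_succ_le hi)
      have hkL : k < L := Nat.lt_of_succ_le hi
      have hlt : clsCard (c k) < clsCard (c (k + 1)) :=
        clsCard_lt_of_le_of_ne (hc k hkL).1 (hc k hkL).2
      obtain ⟨j, _, hj⟩ := (Nat.dvd_prime_pow hp).mp (hG ▸ clsCard_dvd (c (k + 1)))
      have hkj : p ^ k < p ^ j := lt_of_le_of_lt hk (hj ▸ hlt)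
      have : k < j := (Nat.pow_lt_pow_iff_right hp.one_lt).mp hkj
      calc p ^ (k + 1) ≤ p ^ j := Nat.pow_le_pow_right hp.one_lt.le this
        _ = clsCard (c (k + 1)) := hj.symm
  have h1 : p ^ L ≤ clsCard (c L) := key L le_rfl
  have h2 : clsCard (c L) ≤ p ^ m :=
    hG ▸ Nat.le_of_dvd Nat.card_pos (clsCard_dvd (c L))
  exact (Nat.pow_le_pow_iff_right hp.one_lt).mp (le_trans h1 h2)

theorem exists_chain {p m : ℕ} [hp : Fact p.Prime] (hG : Nat.card G = p ^ m) :
    ∃ c : ℕ → IsoClasses G, ∀ i < m, c i ≤ c (i + 1) ∧ c i ≠ c (i + 1) := by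
  have step : ∀ (H : Subgroup G) (k : ℕ), Nat.card ↥H = p ^ k → k < m →
      ∃ K : Subgroup G, Nat.card ↥K = p ^ (k + 1) ∧ H ≤ K := by
    intro H k hH hk
    exact Sylow.exists_subgroup_card_pow_succ (by rw [hG]; exact pow_dvd_pow p hk) hH
  let f : ℕ → Subgroup G := fun i =>
    Nat.rec ⊥ (fun k Hk =>
      if h : Nat.card ↥Hk = p ^ k ∧ k < m then (step Hk k h.1 h.2).choose else Hk) i
  have hf0 : f 0 = ⊥ := rfl
  have hfs : ∀ k, f (k + 1) =
      if h : Nat.card ↥(f k) = p ^ k ∧ k < m then (step (f k) k h.1 h.2).choose else f k :=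
    fun k => rfl
  have hcard : ∀ i, i ≤ m → Nat.card ↥(f i) = p ^ i := by
    intro i
    induction i with
    | zero => intro _; rw [hf0]; simp
    | succ k ih =>
      intro hi
      have hk := ih (Nat.le_of_succ_le hi)
      have hcond : Nat.card ↥(f k) = p ^ k ∧ k < m := ⟨hk, Nat.lt_of_succ_le hi⟩
      rw [hfs k, dif_pos hcond]
      exact (step (f k) k hcond.1 hcond.2).choose_spec.1
  have hle : ∀ i, i + 1 ≤ m → f i ≤ f (i + 1) := by
    intro i hi
    have hcond : Nat.card ↥(f i) = p ^ i ∧ i < m :=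
      ⟨hcard i (Nat.le_of_succ_le hi), Nat.lt_of_succ_le hi⟩
    rw [hfs i, dif_pos hcond]
    exact (step (f i) i hcond.1 hcond.2).choose_spec.2
  refine ⟨fun i => IsoCls (f i), fun i hi => ⟨⟨f i, f (i + 1), rfl, rfl, hle i hi⟩, ?_⟩⟩
  intro hEq
  have h1 := congrArg clsCard hEq
  rw [clsCard_mk, clsCard_mk, hcard i hi.le, hcard (i + 1) hi] at h1
  have := Nat.pow_right_injective hp.out.two_le h1
  omega

theorem exp_eq_of_orderIso {G' : Type*} [Group G'] [Finite G'] {p q m n : ℕ}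
    (hp : p.Prime) (hq : q.Prime) (hG : Nat.card G = p ^ m) (hG' : Nat.card G' = q ^ n)
    (F : IsoClasses G ≃o IsoClasses G') : m = n := by
  haveI : Fact p.Prime := ⟨hp⟩
  haveI : Fact q.Prime := ⟨hq⟩
  have h1 : m ≤ n := by
    obtain ⟨c, hc⟩ := exists_chain hG
    refine chain_le hq hG' (c := fun i => F (c i)) fun i hi => ⟨?_, ?_⟩
    · exact F.map_rel_iff.mpr (hc i hi).1
    · intro h; exact (hc i hi).2 (F.injective h)
  have h2 : n ≤ m := by
    obtain ⟨c, hc⟩ := exists_chain hG'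
    refine chain_le hp hG (c := fun i => F.symm (c i)) fun i hi => ⟨?_, ?_⟩
    · exact F.symm.map_rel_iff.mpr (hc i hi).1
    · intro h; exact (hc i hi).2 (F.symm.injective h)
  omega

end Chain

/-! ### Atoms of `IsoClasses` -/

section Atoms

variable {G : Type*} [Group G]

open Classical in
/-- The isomorphism class of a subgroup of cardinality `p` (or `⊥` if none exists). -/
noncomputable def aCls (G : Type*) [Group G] (p : ℕ) : IsoClasses G :=
  IsoCls (if h : ∃ H : Subgroup G, Nat.card ↥H = p then h.choose else ⊥)

variable [Finite G]

theorem exists_card_eq {p : ℕ} (hp : p.Prime) (h : p ∣ Nat.card G) :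
    ∃ H : Subgroup G, Nat.card ↥H = p := by
  haveI : Fact p.Prime := ⟨hp⟩
  obtain ⟨g, hg⟩ := exists_prime_orderOf_dvd_card' p h
  exact ⟨Subgroup.zpowers g, by rw [Nat.card_zpowers, hg]⟩

theorem clsCard_aCls {p : ℕ} (hp : p.Prime) (h : p ∣ Nat.card G) :
    clsCard (aCls G p) = p := by
  rw [aCls]
  rw [dif_pos (exists_card_eq hp h), clsCard_mk]
  exact (exists_card_eq hp h).choose_spec

theorem cls_eq_aCls {p : ℕ} (hp : p.Prime) {H : Subgroup G} (hH : Nat.card ↥H = p) :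
    IsoCls H = aCls G p := by
  have hex : ∃ K : Subgroup G, Nat.card ↥K = p := ⟨H, hH⟩
  haveI : Fact p.Prime := ⟨hp⟩
  rw [aCls]
  rw [dif_pos hex]
  exact cls_eq_iff.mpr ⟨mulEquivOfPrimeCardEq hH hex.choose_spec⟩

/-- An order-theoretic atom in `IsoClasses G`. -/
def IsAtomCls (x : IsoClasses G) : Prop :=
  x ≠ IsoCls ⊥ ∧ ∀ y, y ≤ x → y = IsoCls ⊥ ∨ y = x

theorem isAtomCls_aCls {p : ℕ} (hp : p.Prime) (h : p ∣ Nat.card G) :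
    IsAtomCls (aCls G p) := by
  constructor
  · intro hEq
    have := congrArg clsCard hEq
    rw [clsCard_aCls hp h, clsCard_bot] at this
    exact hp.one_lt.ne' this
  · intro y hy
    obtain ⟨A, B, rfl, hB, hAB⟩ := hy
    have hcB : Nat.card ↥B = p := by
      have := congrArg clsCard hB
      rw [clsCard_mk, clsCard_aCls hp h] at this
      exact this
    have hdA : Nat.card ↥A ∣ p := hcB ▸ Subgroup.card_dvd_of_le hAB
    rcases (Nat.dvd_prime hp).mp hdA with h1 | h1
    · left
      rw [Subgroup.card_eq_one.mp h1]
    · right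
      exact cls_eq_aCls hp h1

theorem isAtomCls_iff {x : IsoClasses G} :
    IsAtomCls x ↔ ∃ p, p.Prime ∧ p ∣ Nat.card G ∧ x = aCls G p := by
  refine ⟨?_, fun ⟨p, hp, hd, hx⟩ => hx ▸ isAtomCls_aCls hp hd⟩
  rintro ⟨hne, hatom⟩
  obtain ⟨H, rfl⟩ := ex_rep x
  have hH1 : Nat.card ↥H ≠ 1 := by
    intro h
    exact hne (by rw [Subgroup.card_eq_one.mp h])
  obtain ⟨q, hq, hqd⟩ := Nat.exists_prime_and_dvd hH1
  haveI : Fact q.Prime := ⟨hq⟩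
  obtain ⟨g, hg⟩ := exists_prime_orderOf_dvd_card' (G := ↥H) q hqd
  have hz : Subgroup.zpowers (↑g : G) ≤ H := Subgroup.zpowers_le.mpr g.2
  have hcz : Nat.card ↥(Subgroup.zpowers (↑g : G)) = q := by
    rw [Nat.card_zpowers, Subgroup.orderOf_coe, hg]
  have hle : IsoCls (Subgroup.zpowers (↑g : G)) ≤ IsoCls H := ⟨_, H, rfl, rfl, hz⟩
  rcases hatom _ hle with hbot | hEq
  · exfalso
    have := congrArg clsCard hbot
    rw [clsCard_mk, hcz, clsCard_bot] at this
    exact hq.one_lt.ne' this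
  · exact ⟨q, hq, hqd.trans (Subgroup.card_subgroup_dvd_card H),
      hEq ▸ cls_eq_aCls hq hcz⟩

theorem aCls_card_inj {p q : ℕ} (hp : p.Prime) (hq : q.Prime)
    (hdp : p ∣ Nat.card G) (hdq : q ∣ Nat.card G) (h : aCls G p = aCls G q) : p = q := by
  have := congrArg clsCard h
  rwa [clsCard_aCls hp hdp, clsCard_aCls hq hdq] at this

/-- `x` lies "purely above" the atom `a`: every atom below `x` equals `a`. -/
def PureCls (a x : IsoClasses G) : Prop := ∀ b, IsAtomCls b → b ≤ x → b = a

end Atoms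

/-! ### Transfer of order-theoretic notions along an `OrderIso` -/

section Transfer

variable {G : Type*} [Group G] [Finite G] {G' : Type*} [Group G'] [Finite G']

theorem orderIso_bot (F : IsoClasses G ≃o IsoClasses G') :
    F (IsoCls ⊥) = IsoCls (⊥ : Subgroup G') := by
  apply eq_bot_of_le_bot
  have : F (IsoCls ⊥) ≤ F (F.symm (IsoCls ⊥)) := F.map_rel_iff.mpr (bot_cls_le _)
  simpa using this

theorem orderIso_atom (F : IsoClasses G ≃o IsoClasses G') {x : IsoClasses G}
    (h : IsAtomCls x) : IsAtomCls (F x) := by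
  obtain ⟨hne, hat⟩ := h
  constructor
  · intro hEq
    apply hne
    have := congrArg F.symm hEq
    rwa [F.symm_apply_apply, orderIso_bot F.symm] at this
  · intro y hy
    have hy' : F.symm y ≤ x := by
      have := F.symm.map_rel_iff.mpr hy
      rwa [F.symm_apply_apply] at this
    rcases hat _ hy' with h1 | h1
    · left
      have := congrArg F h1
      rwa [F.apply_symm_apply, orderIso_bot F] at this
    · right
      have := congrArg F h1
      rwa [F.apply_symm_apply] at this

theorem orderIso_pure (F : IsoClasses G ≃o IsoClasses G') {a x : IsoClasses G}
    (h : PureCls a x) : PureCls (F a) (F x) := by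
  intro b hb hble
  have hb' : IsAtomCls (F.symm b) := orderIso_atom F.symm hb
  have hble' : F.symm b ≤ x := by
    have := F.symm.map_rel_iff.mpr hble
    rwa [F.symm_apply_apply] at this
  have := h _ hb' hble'
  have := congrArg F this
  rwa [F.apply_symm_apply] at this

end Transfer

/-! ### Primary components of a finite abelian group -/

section Comm

variable {G : Type*} [CommGroup G] [Finite G]

/-- The exponent used to define the projection onto the `p`-primary component. -/
noncomputable def kexp (G : Type*) [Group G] [Finite G] (p : ℕ) : ℕ :=
  (Nat.card G / p ^ (Nat.card G).factorization p) *
    (((Nat.card G / p ^ (Nat.card G).factorization p : ℕ) :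
      ZMod (p ^ (Nat.card G).factorization p))⁻¹).val

theorem kexp_modEq (G : Type*) [Group G] [Finite G] {p : ℕ} (hp : p.Prime) :
    kexp G p ≡ 1 [MOD p ^ (Nat.card G).factorization p] := by
  have hn : Nat.card G ≠ 0 := Nat.card_pos.ne'
  have hcop : Nat.Coprime (Nat.card G / p ^ (Nat.card G).factorization p)
      (p ^ (Nat.card G).factorization p) :=
    Nat.Coprime.pow_right _ (Nat.coprime_ordCompl hp hn).symm
  haveI : NeZero (p ^ (Nat.card G).factorization p) := ⟨pow_ne_zero _ hp.pos.ne'⟩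
  have h1 : ((kexp G p : ℕ) : ZMod (p ^ (Nat.card G).factorization p)) = 1 := by
    rw [kexp, Nat.cast_mul, ZMod.natCast_zmod_val]
    exact ZMod.coe_mul_inv_eq_one _ hcop
  have := (ZMod.natCast_eq_natCast_iff _ _ _).mp (h1.trans (Nat.cast_one).symm)
  exact this

theorem ordProj_dvd_kexp (G : Type*) [Group G] [Finite G] {p q : ℕ}
    (hq : q.Prime) (hp : p.Prime) (hne : q ≠ p) :
    q ^ (Nat.card G).factorization q ∣ kexp G p := by
  have h1 : q ^ (Nat.card G).factorization q ∣ Nat.card G := Nat.ordProj_dvd _ _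
  have hcop : Nat.Coprime (q ^ (Nat.card G).factorization q)
      (p ^ (Nat.card G).factorization p) :=
    Nat.Coprime.pow _ _ ((Nat.coprime_primes hq hp).mpr hne)
  have h2 : q ^ (Nat.card G).factorization q ∣
      Nat.card G / p ^ (Nat.card G).factorization p := by
    refine hcop.dvd_of_dvd_mul_right ?_
    rwa [Nat.div_mul_cancel (Nat.ordProj_dvd _ _)]
  exact h2.trans (dvd_mul_right _ _)

theorem card_dvd_sum_kexp (G : Type*) [Group G] [Finite G] :
    (Nat.card G : ℤ) ∣ (∑ p ∈ (Nat.card G).primeFactors, kexp G p : ℤ) - 1 := by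
  have hn : Nat.card G ≠ 0 := Nat.card_pos.ne'
  have hfact : ∏ p ∈ (Nat.card G).primeFactors, p ^ (Nat.card G).factorization p =
      Nat.card G := by
    rw [← Nat.support_factorization]
    exact Nat.factorization_prod_pow_eq_self hn
  have hfactZ : ((Nat.card G : ℤ)) =
      ∏ p ∈ (Nat.card G).primeFactors, (p : ℤ) ^ (Nat.card G).factorization p := by
    have := congrArg (fun k : ℕ => (k : ℤ)) hfact
    push_cast at this
    exact this.symm
  rw [hfactZ]
  refine Finset.prod_dvd_of_coprime ?_ ?_
  · intro a ha b hb hab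
    have hpa := Nat.prime_of_mem_primeFactors ha
    have hpb := Nat.prime_of_mem_primeFactors hb
    have : IsCoprime (a : ℤ) (b : ℤ) :=
      Int.isCoprime_iff_gcd_eq_one.mpr (by
        simpa [Int.gcd_natCast_natCast] using ((Nat.coprime_primes hpa hpb).mpr hab))
    exact (this.pow : IsCoprime ((a : ℤ) ^ _) ((b : ℤ) ^ _))
  · intro p hp
    have hpp := Nat.prime_of_mem_primeFactors hp
    have hsplit : ∑ q ∈ (Nat.card G).primeFactors, (kexp G q : ℤ) =
        (kexp G p : ℤ) + ∑ q ∈ (Nat.card G).primeFactors.erase p, (kexp G q : ℤ) :=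
      (Finset.add_sum_erase _ _ hp).symm
    have h1 : ((p : ℤ) ^ (Nat.card G).factorization p) ∣ (kexp G p : ℤ) - 1 := by
      have := (kexp_modEq G hpp).symm.dvd
      simpa using this
    have h2 : ((p : ℤ) ^ (Nat.card G).factorization p) ∣
        ∑ q ∈ (Nat.card G).primeFactors.erase p, (kexp G q : ℤ) := by
      refine Finset.dvd_sum fun q hq => ?_
      have hqmem := Finset.mem_of_mem_erase hq
      have hqne : p ≠ q := (Finset.ne_of_mem_erase hq).symm
      have := ordProj_dvd_kexp G hpp (Nat.prime_of_mem_primeFactors hqmem) hqne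
      exact_mod_cast Int.natCast_dvd_natCast.mpr this
    have : ((p : ℤ) ^ (Nat.card G).factorization p) ∣
        ((kexp G p : ℤ) - 1) + ∑ q ∈ (Nat.card G).primeFactors.erase p, (kexp G q : ℤ) :=
      dvd_add h1 h2
    have heq : (∑ q ∈ (Nat.card G).primeFactors, kexp G q : ℤ) - 1 =
        ((kexp G p : ℤ) - 1) + ∑ q ∈ (Nat.card G).primeFactors.erase p, (kexp G q : ℤ) := by
      push_cast
      rw [hsplit]; ring
    rwa [heq]

variable (G) in
/-- The `p`-primary component, as the kernel of `x ↦ x ^ (p ^ vₚ(|G|))`. -/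
noncomputable def prim (p : ℕ) : Subgroup G :=
  MonoidHom.ker (powMonoidHom (p ^ (Nat.card G).factorization p) : G →* G)

theorem mem_prim {p : ℕ} {x : G} :
    x ∈ prim G p ↔ x ^ p ^ (Nat.card G).factorization p = 1 := Iff.rfl

variable (G) in
/-- Projection onto the `p`-primary component. -/
noncomputable def primProj (p : ℕ) : G →* G := powMonoidHom (kexp G p)

theorem primProj_apply (p : ℕ) (x : G) : primProj G p x = x ^ kexp G p := rfl

theorem primProj_mem_prim (p : ℕ) (x : G) : primProj G p x ∈ prim G p := by
  rw [mem_prim, primProj_apply, ← pow_mul, kexp, mul_right_comm,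
    Nat.div_mul_cancel (Nat.ordProj_dvd _ _), pow_mul, pow_card_eq_one', one_pow]

theorem primProj_eq_self {p : ℕ} (hp : p.Prime) {x : G} (hx : x ∈ prim G p) :
    primProj G p x = x := by
  rw [primProj_apply]
  have h1 : orderOf x ∣ p ^ (Nat.card G).factorization p := orderOf_dvd_of_pow_eq_one hx
  have h2 : kexp G p ≡ 1 [MOD orderOf x] := (kexp_modEq G hp).of_dvd h1
  calc x ^ kexp G p = x ^ 1 := pow_eq_pow_iff_modEq.mpr h2
    _ = x := pow_one x

theorem primProj_eq_one {p q : ℕ} (hp : p.Prime) (hq : q.Prime) (hne : q ≠ p) {x : G}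
    (hx : x ∈ prim G q) : primProj G p x = 1 := by
  have h1 : orderOf x ∣ q ^ (Nat.card G).factorization q := orderOf_dvd_of_pow_eq_one hx
  have h2 : orderOf x ∣ kexp G p := h1.trans (ordProj_dvd_kexp G hq hp hne)
  exact orderOf_dvd_iff_pow_eq_one.mp h2

theorem prod_primProj (x : G) :
    ∏ p ∈ (Nat.card G).primeFactors, primProj G p x = x := by
  simp only [primProj_apply]
  rw [Finset.prod_pow_eq_pow_sum]
  have hd : ((orderOf x : ℕ) : ℤ) ∣
      (∑ p ∈ (Nat.card G).primeFactors, kexp G p : ℤ) - 1 :=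
    dvd_trans (Int.natCast_dvd_natCast.mpr (orderOf_dvd_natCard x)) (card_dvd_sum_kexp G)
  have h3 : x ^ ((∑ p ∈ (Nat.card G).primeFactors, kexp G p : ℕ) : ℤ) = x ^ (1 : ℤ) := by
    rw [zpow_eq_zpow_iff_modEq]
    exact (Int.modEq_iff_dvd.mpr (by simpa using hd)).symm
  rw [zpow_natCast, zpow_one] at h3
  exact h3

theorem mem_of_mem_iSup {A : (Nat.card G).primeFactors → Subgroup G}
    (hA : ∀ q, A q ≤ prim G ↑q) {x : G} (hx : x ∈ ⨆ q, A q)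
    (p : (Nat.card G).primeFactors) (hxp : x ∈ prim G ↑p) : x ∈ A p := by
  have hp := Nat.prime_of_mem_primeFactors p.2
  have hproj : Subgroup.map (primProj G ↑p) (⨆ q, A q) ≤ A p := by
    rw [Subgroup.map_iSup]
    refine iSup_le fun q => ?_
    rcases eq_or_ne q p with rfl | hne
    · rintro y ⟨z, hz, rfl⟩
      rw [primProj_eq_self hp (hA q hz)]
      exact hz
    · rintro y ⟨z, hz, rfl⟩
      rw [primProj_eq_one hp (Nat.prime_of_mem_primeFactors q.2)
        (fun h => hne (Subtype.ext h)) (hA q hz)]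
      exact one_mem _
    
  have h1 : primProj G ↑p x ∈ A p := hproj ⟨x, hx, rfl⟩
  rwa [primProj_eq_self hp hxp] at h1

theorem le_iSup_inf_prim (H : Subgroup G) :
    H ≤ ⨆ p : (Nat.card G).primeFactors, (H ⊓ prim G ↑p) := by
  intro x hx
  rw [← prod_primProj x, ← Finset.prod_attach]
  refine Subgroup.prod_mem _ fun p _ => ?_
  have hmem : primProj G ↑p x ∈ H ⊓ prim G ↑p :=
    ⟨H.pow_mem hx _, primProj_mem_prim _ _⟩
  exact le_iSup (fun p : (Nat.card G).primeFactors => H ⊓ prim G ↑p) p hmem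

/-- glue injective maps on the primary parts into an injective map. -/
theorem glue_embedding {H K : Subgroup G}
    (f : ∀ p : (Nat.card G).primeFactors,
      ↥(H.subgroupOf (prim G ↑p)) →* ↥(K.subgroupOf (prim G ↑p)))
    (hf : ∀ p, Function.Injective (f p)) :
    ∃ F : ↥H →* ↥K, Function.Injective F := by
  classical
  -- component maps
  let ρ₀ : ∀ p : (Nat.card G).primeFactors, ↥H →* ↥(prim G ↑p) := fun p =>
    ((primProj G ↑p).comp H.subtype).codRestrict _ fun h => primProj_mem_prim _ _
  let ρ : ∀ p : (Nat.card G).primeFactors, ↥H →* ↥(H.subgroupOf (prim G ↑p)) := fun p =>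
    (ρ₀ p).codRestrict _ fun h => by
      rw [Subgroup.mem_subgroupOf]
      exact H.pow_mem h.2 _
  let ι : ∀ p : (Nat.card G).primeFactors, ↥(K.subgroupOf (prim G ↑p)) →* ↥K := fun p =>
    ((prim G ↑p).subtype.comp (K.subgroupOf (prim G ↑p)).subtype).codRestrict _ fun x =>
      Subgroup.mem_subgroupOf.mp x.2
  let F : ↥H →* ↥K := ∏ p : (Nat.card G).primeFactors, (ι p).comp ((f p).comp (ρ p))
  have hFval : ∀ h : ↥H,
      (↑(F h) : G) = ∏ p : (Nat.card G).primeFactors, (↑(↑(f p (ρ p h)) : ↥(prim G ↑p)) : G) := by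
    intro h
    have h1 : F h = ∏ p : (Nat.card G).primeFactors, (ι p) ((f p) ((ρ p) h)) := by
      rw [MonoidHom.finset_prod_apply]
      rfl
    calc (↑(F h) : G) = ↑(∏ p : (Nat.card G).primeFactors, (ι p) ((f p) ((ρ p) h))) := by
          rw [h1]
      _ = ∏ p : (Nat.card G).primeFactors, (↑((ι p) ((f p) ((ρ p) h))) : G) :=
          map_prod K.subtype _ _
      _ = _ := rfl
  refine ⟨F, (injective_iff_map_eq_one F).mpr fun h hh => ?_⟩
  have hcoe : ∏ p : (Nat.card G).primeFactors,
      (↑(↑(f p (ρ p h)) : ↥(prim G ↑p)) : G) = 1 := by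
    rw [← hFval h, hh]; rfl
  have indep : ∀ p : (Nat.card G).primeFactors,
      (↑(↑(f p (ρ p h)) : ↥(prim G ↑p)) : G) = 1 := by
    intro p
    have hp := Nat.prime_of_mem_primeFactors p.2
    have := congrArg (primProj G ↑p) hcoe
    rw [map_prod, map_one] at this
    rw [Finset.prod_eq_single p (fun q _ hq =>
        primProj_eq_one hp (Nat.prime_of_mem_primeFactors q.2)
          (fun hc => hq (Subtype.ext hc)) (↑(f q (ρ q h)) : ↥(prim G ↑q)).2)
      (fun hc => absurd (Finset.mem_univ p) hc)] at this
    rwa [primProj_eq_self hp (↑(f p (ρ p h)) : ↥(prim G ↑p)).2] at this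
  have hρ : ∀ p : (Nat.card G).primeFactors, ρ p h = 1 := by
    intro p
    have h2 : f p (ρ p h) = 1 := by
      apply Subtype.ext
      apply Subtype.ext
      simpa using indep p
    exact hf p (by rw [h2, map_one])
  have hproj : ∀ p ∈ (Nat.card G).primeFactors, primProj G p (↑h : G) = 1 := by
    intro p hp
    have h5 : ((ρ ⟨p, hp⟩ h : ↥(H.subgroupOf (prim G p))) : ↥(prim G p)) = 1 :=
      congrArg Subtype.val (hρ ⟨p, hp⟩)
    exact congrArg Subtype.val h5
  apply Subtype.ext
  rw [← prod_primProj (↑h : G)]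
  simp only [OneMemClass.coe_one]
  exact Finset.prod_eq_one hproj

/-- An injective hom `H →* K` induces one on the primary parts. -/
theorem primary_embed {H K : Subgroup G} (f : ↥H →* ↥K) (hf : Function.Injective f)
    (p : ℕ) :
    ∃ g : ↥(H.subgroupOf (prim G p)) →* ↥(K.subgroupOf (prim G p)),
      Function.Injective g := by
  let j : ↥(H.subgroupOf (prim G p)) →* ↥H :=
    ((prim G p).subtype.comp (H.subgroupOf (prim G p)).subtype).codRestrict _ fun x =>
      Subgroup.mem_subgroupOf.mp x.2
  have hj : ∀ x, (↑(j x) : G) = ((↑(↑x : ↥(prim G p)) : G)) := fun x => rfl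
  have key : ∀ x : ↥(H.subgroupOf (prim G p)), (↑(f (j x)) : G) ∈ prim G p := by
    intro x
    rw [mem_prim]
    have hx : ((↑(↑x : ↥(prim G p)) : G)) ^ p ^ (Nat.card G).factorization p = 1 :=
      (↑x : ↥(prim G p)).2
    have h1 : (j x) ^ p ^ (Nat.card G).factorization p = 1 := by
      apply Subtype.ext
      rw [SubmonoidClass.coe_pow, hj x, hx]
      rfl
    calc (↑(f (j x)) : G) ^ p ^ (Nat.card G).factorization p
        = ↑((f (j x)) ^ p ^ (Nat.card G).factorization p) := by
          rw [SubmonoidClass.coe_pow]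
      _ = ↑(f ((j x) ^ p ^ (Nat.card G).factorization p)) := by rw [map_pow]
      _ = 1 := by rw [h1, map_one]; rfl
  let t : ↥(H.subgroupOf (prim G p)) →* ↥(prim G p) :=
    (K.subtype.comp (f.comp j)).codRestrict _ key
  let g : ↥(H.subgroupOf (prim G p)) →* ↥(K.subgroupOf (prim G p)) :=
    t.codRestrict _ fun x => by
      rw [Subgroup.mem_subgroupOf]
      exact (f (j x)).2
  refine ⟨g, fun a b hab => ?_⟩
  have hgval : ∀ x, (prim G p).subtype ((K.subgroupOf (prim G p)).subtype (g x)) =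
      K.subtype (f (j x)) := fun x => rfl
  have h1 : K.subtype (f (j a)) = K.subtype (f (j b)) := by
    rw [← hgval, ← hgval, hab]
  have h3 : j a = j b := hf (K.subtype_injective h1)
  have hjval : ∀ x, (prim G p).subtype ((H.subgroupOf (prim G p)).subtype x) =
      H.subtype (j x) := fun x => rfl
  have h4 : (prim G p).subtype ((H.subgroupOf (prim G p)).subtype a) =
      (prim G p).subtype ((H.subgroupOf (prim G p)).subtype b) := by
    rw [hjval, hjval, h3]
  exact (H.subgroupOf (prim G p)).subtype_injective ((prim G p).subtype_injective h4)

theorem subgroupOf_cls_le {H K : Subgroup G} (h : IsoCls H ≤ IsoCls K) (p : ℕ) :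
    IsoCls (H.subgroupOf (prim G p)) ≤ IsoCls (K.subgroupOf (prim G p)) := by
  obtain ⟨f, hf⟩ := cls_le_iff.mp h
  obtain ⟨g, hg⟩ := primary_embed f hf p
  exact cls_le_iff.mpr ⟨g, hg⟩

theorem subgroupOf_cls_congr {H K : Subgroup G} (h : IsoCls H = IsoCls K) (p : ℕ) :
    IsoCls (H.subgroupOf (prim G p)) = IsoCls (K.subgroupOf (prim G p)) :=
  cls_le_antisymm (subgroupOf_cls_le (h ▸ cls_le_refl (IsoCls H)) p)
    (subgroupOf_cls_le (h ▸ cls_le_refl (IsoCls H)) p)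

variable (G) in
/-- The map sending a class in `G` to the class of the `p`-primary part. -/
noncomputable def rMap (p : ℕ) : IsoClasses G → IsoClasses ↥(prim G p) :=
  fun x => IsoCls ((Quotient.out x).subgroupOf (prim G p))

theorem rMap_mk (H : Subgroup G) (p : ℕ) :
    rMap G p (IsoCls H) = IsoCls (H.subgroupOf (prim G p)) :=
  subgroupOf_cls_congr (Quotient.out_eq (IsoCls H)) p

variable (G) in
/-- The map sending a class of subgroups of the primary component to its class in `G`. -/
noncomputable def jMap (p : ℕ) : IsoClasses ↥(prim G p) → IsoClasses G :=
  Quotient.lift (fun K : Subgroup ↥(prim G p) => IsoCls (K.map (prim G p).subtype))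
    (fun A B ⟨e⟩ => cls_eq_iff.mpr
      ⟨((A.equivMapOfInjective _ (Subgroup.subtype_injective _)).symm.trans e).trans
        (B.equivMapOfInjective _ (Subgroup.subtype_injective _))⟩)

theorem jMap_mk (K : Subgroup ↥(prim G p)) :
    jMap G p (IsoCls K) = IsoCls (K.map (prim G p).subtype) := rfl

theorem rMap_jMap {p : ℕ} (x : IsoClasses ↥(prim G p)) : rMap G p (jMap G p x) = x := by
  obtain ⟨K, rfl⟩ := ex_rep x
  rw [jMap_mk, rMap_mk]
  congr 1
  exact Subgroup.comap_map_eq_self_of_injective (Subgroup.subtype_injective _) K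

theorem jMap_le_iff {p : ℕ} {x y : IsoClasses ↥(prim G p)} :
    jMap G p x ≤ jMap G p y ↔ x ≤ y := by
  obtain ⟨A, rfl⟩ := ex_rep x
  obtain ⟨B, rfl⟩ := ex_rep y
  rw [jMap_mk, jMap_mk, cls_le_iff, cls_le_iff]
  constructor
  · rintro ⟨f, hf⟩
    refine ⟨((B.equivMapOfInjective _ (Subgroup.subtype_injective _)).symm.toMonoidHom.comp
      f).comp (A.equivMapOfInjective _ (Subgroup.subtype_injective _)).toMonoidHom, ?_⟩
    exact ((B.equivMapOfInjective _ (Subgroup.subtype_injective _)).symm.injective.comp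
      hf).comp (A.equivMapOfInjective _ (Subgroup.subtype_injective _)).injective
  · rintro ⟨f, hf⟩
    refine ⟨((B.equivMapOfInjective _ (Subgroup.subtype_injective _)).toMonoidHom.comp
      f).comp (A.equivMapOfInjective _ (Subgroup.subtype_injective _)).symm.toMonoidHom, ?_⟩
    exact ((B.equivMapOfInjective _ (Subgroup.subtype_injective _)).injective.comp
      hf).comp (A.equivMapOfInjective _ (Subgroup.subtype_injective _)).symm.injective

variable (G) in
/-- The decomposition map of `IsoClasses G` into primary data. -/
noncomputable def decompMap :
    IsoClasses G → ∀ p : (Nat.card G).primeFactors, IsoClasses ↥(prim G ↑p) :=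
  fun x p => rMap G ↑p x

theorem decomp_le_iff {x y : IsoClasses G} :
    decompMap G x ≤ decompMap G y ↔ x ≤ y := by
  obtain ⟨H, rfl⟩ := ex_rep x
  obtain ⟨K, rfl⟩ := ex_rep y
  rw [Pi.le_def]
  constructor
  · intro h
    have h' : ∀ p : (Nat.card G).primeFactors,
        ∃ g : ↥(H.subgroupOf (prim G ↑p)) →* ↥(K.subgroupOf (prim G ↑p)),
          Function.Injective g := by
      intro p
      have := h p
      rw [decompMap, decompMap, rMap_mk, rMap_mk] at this
      exact cls_le_iff.mp this
    obtain ⟨F, hF⟩ := glue_embedding (fun p => (h' p).choose) (fun p => (h' p).choose_spec)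
    exact cls_le_iff.mpr ⟨F, hF⟩
  · intro h p
    rw [decompMap, decompMap, rMap_mk, rMap_mk]
    exact subgroupOf_cls_le h ↑p

theorem decomp_injective : Function.Injective (decompMap G) := by
  intro x y h
  refine cls_le_antisymm (decomp_le_iff.mp ?_) (decomp_le_iff.mp ?_)
  · intro p; rw [h]; exact cls_le_refl _
  · intro p; rw [h]; exact cls_le_refl _

theorem decomp_surjective : Function.Surjective (decompMap G) := by
  intro x
  let A : ∀ p : (Nat.card G).primeFactors, Subgroup ↥(prim G ↑p) :=
    fun p => Quotient.out (x p)
  let M : ∀ p : (Nat.card G).primeFactors, Subgroup G :=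
    fun p => (A p).map (prim G ↑p).subtype
  refine ⟨IsoCls (⨆ p, M p), ?_⟩
  funext p
  rw [decompMap, rMap_mk]
  have hMP : ∀ q, M q ≤ prim G ↑q := fun q => Subgroup.map_subtype_le _
  have h1 : (⨆ q, M q).subgroupOf (prim G ↑p) = A p := by
    ext z
    rw [Subgroup.mem_subgroupOf]
    constructor
    · intro hz
      have hzM : (↑z : G) ∈ M p := mem_of_mem_iSup hMP hz p z.2
      obtain ⟨w, hw, hwz⟩ := Subgroup.mem_map.mp hzM
      have : w = z := Subtype.ext hwz
      exact this ▸ hw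
    · intro hz
      have : (↑z : G) ∈ M p := Subgroup.mem_map.mpr ⟨z, hz, rfl⟩
      exact le_iSup M p this
  rw [h1]
  exact Quotient.out_eq (x p)

variable (G) in
/-- The decomposition of `IsoClasses G` into primary data, as an order isomorphism. -/
noncomputable def decompOrderIso :
    IsoClasses G ≃o ∀ p : (Nat.card G).primeFactors, IsoClasses ↥(prim G ↑p) where
  toEquiv := Equiv.ofBijective (decompMap G) ⟨decomp_injective, decomp_surjective⟩
  map_rel_iff' := decomp_le_iff

/-! ### Sylow subgroups and primary components -/

theorem sylow_eq_prim {p : ℕ} [hp : Fact p.Prime] (P : Sylow p G) :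
    (P : Subgroup G) = prim G p := by
  have hPr : IsPGroup p ↥(prim G p) := fun g =>
    ⟨(Nat.card G).factorization p, by
      apply Subtype.ext
      rw [SubmonoidClass.coe_pow]
      exact g.2⟩
  obtain ⟨Q, hQ⟩ := hPr.exists_le_sylow
  have huniq : ∀ Q' R : Sylow p G, Q' = R := fun Q' R => by
    obtain ⟨g, hg⟩ := MulAction.exists_smul_eq G Q' R
    rwa [Sylow.smul_eq_of_normal] at hg
  have hP_le : (P : Subgroup G) ≤ prim G p := by
    intro x hx
    rw [mem_prim]
    obtain ⟨k, hk⟩ := P.isPGroup' ⟨x, hx⟩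
    have hord : orderOf x ∣ p ^ k := by
      apply orderOf_dvd_of_pow_eq_one
      have := congrArg (fun z => ((z : ↥(P : Subgroup G)) : G)) hk
      simpa using this
    obtain ⟨i, _, hoi⟩ := (Nat.dvd_prime_pow hp.out).mp hord
    have hdvd : p ^ i ∣ Nat.card G := hoi ▸ orderOf_dvd_natCard x
    have hia : i ≤ (Nat.card G).factorization p :=
      (Nat.Prime.pow_dvd_iff_le_factorization hp.out Nat.card_pos.ne').mp hdvd
    exact orderOf_dvd_iff_pow_eq_one.mp (hoi ▸ pow_dvd_pow p hia)
  have hQ' : prim G p ≤ (P : Subgroup G) := (huniq Q P) ▸ hQ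
  exact le_antisymm hP_le hQ'

theorem card_prim {p : ℕ} [Fact p.Prime] :
    Nat.card ↥(prim G p) = p ^ (Nat.card G).factorization p := by
  obtain ⟨P⟩ := (inferInstance : Nonempty (Sylow p G))
  rw [← sylow_eq_prim P]
  exact Sylow.card_eq_multiplicity P

/-! ### Pure classes and the primary component -/

theorem pow_prim_eq_one_of_ppow_order {p : ℕ} (hp : p.Prime) {x : G} {k : ℕ}
    (h : orderOf x ∣ p ^ k) : x ∈ prim G p := by
  rw [mem_prim]
  obtain ⟨i, _, hoi⟩ := (Nat.dvd_prime_pow hp).mp h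
  have hdvd : p ^ i ∣ Nat.card G := hoi ▸ orderOf_dvd_natCard x
  have hia : i ≤ (Nat.card G).factorization p :=
    (Nat.Prime.pow_dvd_iff_le_factorization hp Nat.card_pos.ne').mp hdvd
  exact orderOf_dvd_iff_pow_eq_one.mp (hoi ▸ pow_dvd_pow p hia)

theorem pureCls_iff {p : ℕ} (hp : p.Prime) (hd : p ∣ Nat.card G) {H : Subgroup G} :
    PureCls (aCls G p) (IsoCls H) ↔ H ≤ prim G p := by
  constructor
  · intro hpure x hx
    have hclaim : ∀ q, q.Prime → q ∣ Nat.card ↥H → q = p := by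
      intro q hq hqd
      haveI : Fact q.Prime := ⟨hq⟩
      obtain ⟨g, hg⟩ := exists_prime_orderOf_dvd_card' (G := ↥H) q hqd
      have hcz : Nat.card ↥(Subgroup.zpowers (↑g : G)) = q := by
        rw [Nat.card_zpowers, Subgroup.orderOf_coe, hg]
      have hdq : q ∣ Nat.card G := hqd.trans (Subgroup.card_subgroup_dvd_card H)
      have hatom : IsAtomCls (aCls G q) := isAtomCls_aCls hq hdq
      have hle : aCls G q ≤ IsoCls H := by
        rw [← cls_eq_aCls hq hcz]
        exact ⟨_, H, rfl, rfl, Subgroup.zpowers_le.mpr g.2⟩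
      exact aCls_card_inj hq hp hdq hd (hpure _ hatom hle)
    have hcardH : Nat.card ↥H = p ^ (Nat.card ↥H).primeFactorsList.length :=
      Nat.eq_prime_pow_of_unique_prime_dvd Nat.card_pos.ne'
        (fun hd hdvd => hclaim _ hd hdvd)
    have hord : orderOf x ∣ p ^ (Nat.card ↥H).primeFactorsList.length :=
      hcardH ▸ Subgroup.orderOf_dvd_natCard H hx
    exact pow_prim_eq_one_of_ppow_order hp hord
  · intro hHP b hb hble
    obtain ⟨q, hq, hqd, rfl⟩ := isAtomCls_iff.mp hb
    obtain ⟨A, B, hA, hB, hAB⟩ := hble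
    have hcA : Nat.card ↥A = q := by
      have := congrArg clsCard hA
      rwa [clsCard_mk, clsCard_aCls hq hqd] at this
    have hcB : Nat.card ↥B = Nat.card ↥H := by
      have := congrArg clsCard hB
      rwa [clsCard_mk, clsCard_mk] at this
    have h1 : q ∣ Nat.card ↥H := by
      rw [← hcA, ← hcB]
      exact Subgroup.card_dvd_of_le hAB
    haveI : Fact p.Prime := ⟨hp⟩
    have h2 : Nat.card ↥H ∣ p ^ (Nat.card G).factorization p := by
      rw [← card_prim (G := G) (p := p)]
      exact Subgroup.card_dvd_of_le hHP
    have h3 : q = p :=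
      (Nat.prime_dvd_prime_iff_eq hq hp).mp (hq.dvd_of_dvd_pow (h1.trans h2))
    rw [h3]

theorem jMap_pure {p : ℕ} (hp : p.Prime) (hd : p ∣ Nat.card G)
    (x : IsoClasses ↥(prim G p)) : PureCls (aCls G p) (jMap G p x) := by
  obtain ⟨K, rfl⟩ := ex_rep x
  rw [jMap_mk]
  exact (pureCls_iff hp hd).mpr (Subgroup.map_subtype_le _)

theorem jMap_rMap_of_pure {p : ℕ} (hp : p.Prime) (hd : p ∣ Nat.card G)
    {y : IsoClasses G} (hy : PureCls (aCls G p) y) : jMap G p (rMap G p y) = y := by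
  have hout : IsoCls (Quotient.out y) = y := Quotient.out_eq y
  have hpure : PureCls (aCls G p) (IsoCls (Quotient.out y)) := by
    rw [hout]; exact hy
  have hle : Quotient.out y ≤ prim G p := (pureCls_iff hp hd).mp hpure
  show jMap G p (IsoCls ((Quotient.out y).subgroupOf (prim G p))) = y
  rw [jMap_mk, Subgroup.subgroupOf_map_subtype, inf_of_le_left hle]
  exact hout

end Comm

/-! ### The per-prime order isomorphism induced by a global one -/

section TwoGroups

variable {G : Type*} [CommGroup G] [Finite G] {G' : Type*} [CommGroup G'] [Finite G']

/-- Restrict an order isomorphism to the primary components. -/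
noncomputable def primOrderIso (F : IsoClasses G ≃o IsoClasses G') {p q : ℕ}
    (hp : p.Prime) (hdp : p ∣ Nat.card G) (hq : q.Prime) (hdq : q ∣ Nat.card G')
    (hF : F (aCls G p) = aCls G' q) :
    IsoClasses ↥(prim G p) ≃o IsoClasses ↥(prim G' q) := by
  have hF' : F.symm (aCls G' q) = aCls G p := by
    rw [← hF, F.symm_apply_apply]
  have hjp : ∀ x : IsoClasses ↥(prim G p), PureCls (aCls G' q) (F (jMap G p x)) := by
    intro x
    have := orderIso_pure F (jMap_pure hp hdp x)
    rwa [hF] at this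
  have hjq : ∀ y : IsoClasses ↥(prim G' q), PureCls (aCls G p) (F.symm (jMap G' q y)) := by
    intro y
    have := orderIso_pure F.symm (jMap_pure hq hdq y)
    rwa [hF'] at this
  exact
    { toFun := fun x => rMap G' q (F (jMap G p x))
      invFun := fun y => rMap G p (F.symm (jMap G' q y))
      left_inv := by
        intro x
        show rMap G p (F.symm (jMap G' q (rMap G' q (F (jMap G p x))))) = x
        rw [jMap_rMap_of_pure hq hdq (hjp x), F.symm_apply_apply, rMap_jMap]
      right_inv := by
        intro y
        show rMap G' q (F (jMap G p (rMap G p (F.symm (jMap G' q y))))) = y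
        rw [jMap_rMap_of_pure hp hdp (hjq y), F.apply_symm_apply, rMap_jMap]
      map_rel_iff' := by
        intro x y
        show rMap G' q (F (jMap G p x)) ≤ rMap G' q (F (jMap G p y)) ↔ x ≤ y
        rw [← jMap_le_iff (G := G') (p := q), jMap_rMap_of_pure hq hdq (hjp x),
          jMap_rMap_of_pure hq hdq (hjp y), F.map_rel_iff, jMap_le_iff] }

end TwoGroups

/-! ### Reindexed product of order isomorphisms -/

/-- `Equiv.piCongr` as an order isomorphism. -/
def orderIsoPiCongr {ι ι' : Type*} {X : ι → Type*} {Y : ι' → Type*} [∀ i, LE (X i)]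
    [∀ j, LE (Y j)] (σ : ι ≃ ι') (e : ∀ i, X i ≃o Y (σ i)) :
    (∀ i, X i) ≃o ∀ j, Y j where
  toEquiv := σ.piCongr fun i => (e i).toEquiv
  map_rel_iff' := by
    intro f g
    rw [Pi.le_def, Pi.le_def]
    constructor
    · intro h i
      have := h (σ i)
      rw [Equiv.piCongr_apply_apply, Equiv.piCongr_apply_apply] at this
      exact (e i).map_rel_iff.mp this
    · intro h j
      obtain ⟨i, rfl⟩ : ∃ i, σ i = j := ⟨σ.symm j, σ.apply_symm_apply j⟩
      rw [Equiv.piCongr_apply_apply, Equiv.piCongr_apply_apply]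
      exact (e i).map_rel_iff.mpr (h i)

end IsoClassesAux

open IsoClassesAux

/-- For finite abelian groups `G₁`, `G₂`: `IsoClasses G₁` and
`IsoClasses G₂` are order isomorphic iff there is a bijection `σ` between the prime
divisors of `|G₁|` and of `|G₂|` such that for every prime `p ∣ |G₁|` the corresponding
Sylow subgroups have order isomorphic posets of isomorphism classes of subgroups (in
particular, the exponents in the factorizations match). -/
theorem isoClasses_orderIso_iff_sylow (G₁ : Type*) [CommGroup G₁] [Finite G₁]
    (G₂ : Type*) [CommGroup G₂] [Finite G₂] :
    Nonempty (IsoClasses G₁ ≃o IsoClasses G₂) ↔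
      ∃ σ : (Nat.card G₁).primeFactors ≃ (Nat.card G₂).primeFactors,
        ∀ p : (Nat.card G₁).primeFactors,
          (Nat.card G₁).factorization p = (Nat.card G₂).factorization (σ p) ∧
          ∀ (P : Sylow p G₁) (Q : Sylow (σ p : ℕ) G₂),
            Nonempty (IsoClasses (↥(P : Subgroup G₁)) ≃o IsoClasses (↥(Q : Subgroup G₂))) := by
  constructor
  · rintro ⟨F⟩
    have hatomF : ∀ p : (Nat.card G₁).primeFactors,
        ∃ q, q.Prime ∧ q ∣ Nat.card G₂ ∧ F (aCls G₁ ↑p) = aCls G₂ q := fun p =>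
      isAtomCls_iff.mp (orderIso_atom F (isAtomCls_aCls
        (Nat.prime_of_mem_primeFactors p.2) (Nat.dvd_of_mem_primeFactors p.2)))
    let τ : (Nat.card G₁).primeFactors → (Nat.card G₂).primeFactors := fun p =>
      ⟨(hatomF p).choose, Nat.mem_primeFactors.mpr
        ⟨(hatomF p).choose_spec.1, (hatomF p).choose_spec.2.1, Nat.card_pos.ne'⟩⟩
    have hτF : ∀ p : (Nat.card G₁).primeFactors,
        F (aCls G₁ ↑p) = aCls G₂ ↑(τ p) := fun p =>
      (hatomF p).choose_spec.2.2
    have hτinj : Function.Injective τ := by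
      intro p p' h
      have h1 : F (aCls G₁ ↑p) = F (aCls G₁ ↑p') := by
        rw [hτF p, hτF p', h]
      have h2 : aCls G₁ (↑p : ℕ) = aCls G₁ ↑p' := F.injective h1
      exact Subtype.ext (aCls_card_inj (Nat.prime_of_mem_primeFactors p.2)
        (Nat.prime_of_mem_primeFactors p'.2) (Nat.dvd_of_mem_primeFactors p.2)
        (Nat.dvd_of_mem_primeFactors p'.2) h2)
    have hτsurj : Function.Surjective τ := by
      intro q
      have hq := Nat.prime_of_mem_primeFactors q.2
      have hdq := Nat.dvd_of_mem_primeFactors q.2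
      obtain ⟨p, hp, hdp, hsymm⟩ := isAtomCls_iff.mp (orderIso_atom F.symm
        (isAtomCls_aCls hq hdq))
      have hmem : p ∈ (Nat.card G₁).primeFactors :=
        Nat.mem_primeFactors.mpr ⟨hp, hdp, Nat.card_pos.ne'⟩
      refine ⟨⟨p, hmem⟩, ?_⟩
      have hFp : F (aCls G₁ p) = aCls G₂ ↑q := by
        rw [← hsymm, F.apply_symm_apply]
      have : aCls G₂ ↑(τ ⟨p, hmem⟩) = aCls G₂ ↑q := by
        rw [← hτF ⟨p, hmem⟩, hFp]
      refine Subtype.ext (aCls_card_inj (Nat.prime_of_mem_primeFactors (τ ⟨p, hmem⟩).2)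
        hq (Nat.dvd_of_mem_primeFactors (τ ⟨p, hmem⟩).2) hdq this)
    refine ⟨Equiv.ofBijective τ ⟨hτinj, hτsurj⟩, ?_⟩
    intro p
    have hp := Nat.prime_of_mem_primeFactors p.2
    have hdp := Nat.dvd_of_mem_primeFactors p.2
    have hq := Nat.prime_of_mem_primeFactors (τ p).2
    have hdq := Nat.dvd_of_mem_primeFactors (τ p).2
    haveI : Fact (↑p : ℕ).Prime := ⟨hp⟩
    haveI : Fact (↑(τ p) : ℕ).Prime := ⟨hq⟩
    haveI : Fact (Nat.Prime ↑((Equiv.ofBijective τ ⟨hτinj, hτsurj⟩) p)) := ⟨hq⟩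
    have e := primOrderIso F hp hdp hq hdq (hτF p)
    constructor
    · exact exp_eq_of_orderIso hp hq (card_prim (G := G₁)) (card_prim (G := G₂)) e
    · intro P Q
      have h1 : (P : Subgroup G₁) = prim G₁ ↑p := sylow_eq_prim P
      have h2 : (Q : Subgroup G₂) = prim G₂ ↑(τ p) := sylow_eq_prim Q
      rw [h1, h2]
      exact ⟨e⟩
  · rintro ⟨σ, hσ⟩
    have e : ∀ p : (Nat.card G₁).primeFactors,
        IsoClasses ↥(prim G₁ ↑p) ≃o IsoClasses ↥(prim G₂ ↑(σ p)) := by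
      intro p
      haveI : Fact (↑p : ℕ).Prime := ⟨Nat.prime_of_mem_primeFactors p.2⟩
      haveI : Fact (↑(σ p) : ℕ).Prime := ⟨Nat.prime_of_mem_primeFactors (σ p).2⟩
      have P : Sylow (↑p : ℕ) G₁ := Classical.arbitrary _
      have Q : Sylow (↑(σ p) : ℕ) G₂ := Classical.arbitrary _
      have h := (hσ p).2 P Q
      rw [sylow_eq_prim P, sylow_eq_prim Q] at h
      exact h.some
    exact ⟨((decompOrderIso G₁).trans (orderIsoPiCongr σ e)).trans
      (decompOrderIso G₂).symm⟩
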